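/- Assume F has a bounded density, let x₀>0, let W₀:[0,x₀]→ℝ be continuous, positive, increasing and differentiable at x₀, and let U be the unique twice continuously differentiable solution of L*(U,W₀)=0 on (x₀,∞) with U(x₀)=W₀(x₀) and U'(x₀)=W₀'(x₀). Define γ̃(U,W₀)(x) = min{ 1, 2( M(U,W₀)(x) − pU'(x) ) / ( r x U'(x) ) }. Then L*(U,W₀)(x) = L_{γ̃(U,W₀)(x)}(U,W₀)(x) = 0 for all x ∈ (x₀,∞). -/

import Mathlib

open MeasureTheory Set Filter

open Topology

/-- `M(U,W₀)(x) = (c+β)U(x) - β∫₀^{x-x₀} U(x-α)dF(α) - β∫_{x-x₀}^{x} W₀(x-α)dF(α)`. -/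
noncomputable def Mop2 (β c : ℝ) (F : StieltjesFunction ℝ) (x₀ : ℝ)
    (U W₀ : ℝ → ℝ) (x : ℝ) : ℝ :=
  (c + β) * U x - β * (∫ α in Icc (0 : ℝ) (x - x₀), U (x - α) ∂F.measure)
    - β * ∫ α in Ioc (x - x₀) x, W₀ (x - α) ∂F.measure

/-- `L_γ(U,W₀)(x) = σ²γ²x²U''(x)/2 + (p + rγx)U'(x) - M(U,W₀)(x)`. -/
noncomputable def Lg2 (p β c r σ : ℝ) (F : StieltjesFunction ℝ) (x₀ : ℝ)
    (γ : ℝ) (U W₀ : ℝ → ℝ) (x : ℝ) : ℝ :=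
  σ ^ 2 * γ ^ 2 * x ^ 2 * deriv (deriv U) x / 2 + (p + r * γ * x) * deriv U x
    - Mop2 β c F x₀ U W₀ x

/-- `L*(U,W₀)(x) = sup_{γ ∈ [0,1]} L_γ(U,W₀)(x)`. -/
noncomputable def Lstar2 (p β c r σ : ℝ) (F : StieltjesFunction ℝ) (x₀ : ℝ)
    (U W₀ : ℝ → ℝ) (x : ℝ) : ℝ :=
  ⨆ γ : Icc (0 : ℝ) 1, Lg2 p β c r σ F x₀ (γ : ℝ) U W₀ x

private lemma quad_bdd (A B K : ℝ) :
    BddAbove (Set.range fun γ : Icc (0:ℝ) 1 => A*(γ:ℝ)^2+B*(γ:ℝ)+K) := by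
  refine ⟨|A|+|B|+|K|, ?_⟩
  rintro z ⟨⟨γ, h0, h1⟩, rfl⟩
  simp only
  nlinarith [le_abs_self A, le_abs_self B, le_abs_self K, abs_nonneg A, abs_nonneg B,
    sq_nonneg γ, mul_nonneg (sub_nonneg.2 (le_abs_self A)) (sq_nonneg γ),
    mul_nonneg (abs_nonneg A) (sub_nonneg.2 (by nlinarith : γ^2 ≤ 1)),
    mul_nonneg (sub_nonneg.2 (le_abs_self B)) h0,
    mul_nonneg (abs_nonneg B) (sub_nonneg.2 h1)]

private lemma quad_le {A B K : ℝ}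
    (h : (⨆ γ : Icc (0:ℝ) 1, (A*(γ:ℝ)^2+B*(γ:ℝ)+K)) = 0)
    {γ : ℝ} (h0 : 0 ≤ γ) (h1 : γ ≤ 1) : A*γ^2+B*γ+K ≤ 0 := by
  have := le_ciSup (quad_bdd A B K) (⟨γ, h0, h1⟩ : Icc (0:ℝ) 1)
  rwa [h] at this

private lemma quad_sup_le {A B K : ℝ}
    (h : (⨆ γ : Icc (0:ℝ) 1, (A*(γ:ℝ)^2+B*(γ:ℝ)+K)) = 0)
    {z : ℝ} (hz : ∀ γ : ℝ, 0 ≤ γ → γ ≤ 1 → A*γ^2+B*γ+K ≤ z) : 0 ≤ z := by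
  rw [← h]
  exact ciSup_le (fun γ => hz γ γ.2.1 γ.2.2)

private lemma quad_A_large {A B K δ : ℝ} (hδ : 0 < δ)
    (h : (⨆ γ : Icc (0:ℝ) 1, (A*(γ:ℝ)^2+B*(γ:ℝ)+K)) = 0)
    (hB : B ≤ 0) (hK : K ≤ -δ) : δ ≤ A := by
  have hmax : 0 ≤ max A 0 + K := by
    refine quad_sup_le h (fun γ h0 h1 => ?_)
    have h2 : A*γ^2 ≤ max A 0 := by
      rcases le_or_gt A 0 with hA | hA
      · exact (mul_nonpos_of_nonpos_of_nonneg hA (sq_nonneg γ)).trans (le_max_right _ _)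
      · have : A*γ^2 ≤ A := by
          nlinarith [mul_nonneg hA.le (sub_nonneg.2 (by nlinarith : γ^2 ≤ 1))]
        exact this.trans (le_max_left _ _)
    have h3 : B*γ ≤ 0 := mul_nonpos_of_nonpos_of_nonneg hB h0
    linarith
  rcases le_or_gt A 0 with hA | hA
  · rw [max_eq_right hA] at hmax; linarith
  · rw [max_eq_left hA.le] at hmax; linarith

private lemma quad_main {A B K : ℝ} (hB : 0 < B)
    (h : (⨆ γ : Icc (0:ℝ) 1, (A*(γ:ℝ)^2+B*(γ:ℝ)+K)) = 0) :
    A*(min 1 ((-2*K)/B))^2 + B*(min 1 ((-2*K)/B)) + K = 0 := by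
  have hq1 : A*(1:ℝ)^2+B*1+K ≤ 0 := quad_le h zero_le_one le_rfl
  rcases le_or_gt 0 (2*A+B) with h2 | h2
  · have hAB : 0 ≤ A + B := by linarith
    have hle1 : ∀ γ : ℝ, 0 ≤ γ → γ ≤ 1 → A*γ^2+B*γ+K ≤ A+B+K := by
      intro γ h0 h1
      nlinarith [mul_nonneg (mul_nonneg h0 (sub_nonneg.2 h1)) h2,
        mul_nonneg (sq_nonneg (1-γ)) hAB]
    have h0le : 0 ≤ A+B+K := quad_sup_le h hle1
    have heq : A+B+K = 0 := by nlinarith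
    have hmin : min 1 ((-2*K)/B) = 1 := by
      refine min_eq_left ?_
      rw [le_div_iff₀ hB]
      linarith
    rw [hmin]; linarith [heq]
  · have hA : A < 0 := by linarith
    have hA0 : A ≠ 0 := hA.ne
    set v : ℝ := -B/(2*A) with hv
    have h2Av : 2*A*v + B = 0 := by rw [hv]; field_simp; ring
    have hv0 : 0 < v := by
      rw [hv]
      apply div_pos_iff.2 (Or.inr ⟨by linarith, by linarith⟩)
    have hv1 : v < 1 := by
      have hveq : v = B / (-(2*A)) := by rw [hv]; ring
      rw [hveq, div_lt_one (by linarith)]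
      linarith
    have hlev : ∀ γ : ℝ, 0 ≤ γ → γ ≤ 1 → A*γ^2+B*γ+K ≤ A*v^2+B*v+K := by
      intro γ h0 h1
      have hid : A*v^2+B*v+K - (A*γ^2+B*γ+K) = -(A*(γ-v)^2) + (v-γ)*(2*A*v+B) := by ring
      rw [h2Av, mul_zero, add_zero] at hid
      nlinarith [mul_nonpos_of_nonpos_of_nonneg hA.le (sq_nonneg (γ-v))]
    have h0le : 0 ≤ A*v^2+B*v+K := quad_sup_le h hlev
    have hqv : A*v^2+B*v+K = 0 := le_antisymm (quad_le h hv0.le hv1.le) h0le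
    have hKv : -2*K = B*v := by linear_combination (-2 : ℝ) * hqv + v * h2Av
    have hmin : min 1 ((-2*K)/B) = v := by
      rw [hKv, mul_div_cancel_left₀ _ hB.ne']
      exact min_eq_right hv1.le
    rw [hmin]; exact hqv

private lemma leftLim_F_zero (F : StieltjesFunction ℝ) (hF0 : ∀ x : ℝ, x ≤ 0 → F x = 0) :
    Function.leftLim (⇑F) 0 = 0 := by
  have h : Tendsto (⇑F) (𝓝[<] (0:ℝ)) (𝓝 0) := by
    apply Tendsto.congr' _ tendsto_const_nhds
    filter_upwards [eventually_mem_nhdsWithin] with y hy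
    exact (hF0 y (le_of_lt hy)).symm
  exact leftLim_eq_of_tendsto h

private lemma F_lin_bound (F : StieltjesFunction ℝ) (f : ℝ → ℝ) (C : ℝ)
    (hfm : Measurable f) (hfC : ∀ t, |f t| ≤ C)
    (hfF : ∀ x : ℝ, F x = ∫ t in (0 : ℝ)..x, f t) {t : ℝ} (ht : 0 ≤ t) :
    F t ≤ C * t := by
  rw [hfF]
  have hfi : IntervalIntegrable f volume 0 t := by
    rw [intervalIntegrable_iff]
    refine Integrable.mono' (g := fun _ => C)
      ((integrableOn_const_iff enorm_ne_top).2 (Or.inr ?_)) hfm.aestronglyMeasurable.restrict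
      (ae_of_all _ hfC)
    rw [uIoc_of_le ht]
    exact measure_Ioc_lt_top
  calc ∫ s in (0:ℝ)..t, f s ≤ ∫ _ in (0:ℝ)..t, C :=
        intervalIntegral.integral_mono_on ht hfi intervalIntegrable_const
          (fun s _ => le_trans (le_abs_self _) (hfC s))
    _ = C * t := by simp [mul_comm]

private lemma Mlb (β c : ℝ) (hβ : 0 < β) (F : StieltjesFunction ℝ)
    (hL0 : Function.leftLim (⇑F) 0 = 0)
    (x₀ x : ℝ) (hx : x₀ < x)
    (U W₀ : ℝ → ℝ) (hUc : ContinuousOn U (Ici x₀)) (hW₀c : ContinuousOn W₀ (Icc 0 x₀))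
    (CU CW : ℝ) (hCU : ∀ y ∈ Icc x₀ x, U y ≤ CU) (hCW : ∀ y ∈ Icc 0 x₀, W₀ y ≤ CW)
    (hF0' : 0 ≤ F (x - x₀)) (hFle : F (x - x₀) ≤ F x) :
    (c+β) * U x - β * CU * (F (x-x₀)) - β * CW * (F x - F (x-x₀))
      ≤ Mop2 β c F x₀ U W₀ x := by
  set t := x - x₀ with ht
  have ht0 : 0 < t := by simp [ht]; linarith
  have hcont1 : ContinuousOn (fun α => U (x - α)) (Icc 0 t) := by
    apply hUc.comp (Continuous.continuousOn (by continuity))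
    intro α hα
    simp only [mem_Ici]
    simp only [mem_Icc] at hα
    linarith [hα.1, hα.2]
  have hint1 : IntegrableOn (fun α => U (x-α)) (Icc 0 t) F.measure :=
    hcont1.integrableOn_compact isCompact_Icc
  have hμ1 : F.measure (Icc 0 t) = ENNReal.ofReal (F t) := by
    rw [F.measure_Icc, hL0, sub_zero]
  have hμ1' : F.measure (Icc 0 t) < ⊤ := by rw [hμ1]; exact ENNReal.ofReal_lt_top
  have hI1 : (∫ α in Icc 0 t, U (x-α) ∂F.measure) ≤ CU * F t := by
    calc (∫ α in Icc 0 t, U (x-α) ∂F.measure)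
        ≤ ∫ _ in Icc 0 t, CU ∂F.measure := by
          refine setIntegral_mono_on hint1 (integrableOn_const hμ1'.ne)
            measurableSet_Icc ?_
          intro α hα
          simp only [mem_Icc] at hα
          exact hCU _ ⟨by linarith [hα.2], by linarith [hα.1]⟩
      _ = (F.measure (Icc 0 t)).toReal * CU := by rw [setIntegral_const, smul_eq_mul, measureReal_def]
      _ = CU * F t := by rw [hμ1, ENNReal.toReal_ofReal hF0']; ring
  have hcont2 : ContinuousOn (fun α => W₀ (x - α)) (Icc t x) := by
    apply hW₀c.comp (Continuous.continuousOn (by continuity))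
    intro α hα
    simp only [mem_Icc] at hα ⊢
    constructor <;> linarith [hα.1, hα.2]
  have hint2 : IntegrableOn (fun α => W₀ (x-α)) (Ioc t x) F.measure :=
    (hcont2.integrableOn_compact isCompact_Icc).mono_set Ioc_subset_Icc_self
  have hμ2 : F.measure (Ioc t x) = ENNReal.ofReal (F x - F t) := F.measure_Ioc t x
  have hμ2' : F.measure (Ioc t x) < ⊤ := by rw [hμ2]; exact ENNReal.ofReal_lt_top
  have hI2 : (∫ α in Ioc t x, W₀ (x-α) ∂F.measure) ≤ CW * (F x - F t) := by
    calc (∫ α in Ioc t x, W₀ (x-α) ∂F.measure)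
        ≤ ∫ _ in Ioc t x, CW ∂F.measure := by
          refine setIntegral_mono_on hint2 (integrableOn_const hμ2'.ne)
            measurableSet_Ioc ?_
          intro α hα
          simp only [mem_Ioc] at hα
          exact hCW _ ⟨by linarith [hα.2], by linarith [hα.1]⟩
      _ = (F.measure (Ioc t x)).toReal * CW := by rw [setIntegral_const, smul_eq_mul, measureReal_def]
      _ = CW * (F x - F t) := by
          rw [hμ2, ENNReal.toReal_ofReal (by linarith)]; ring
  simp only [Mop2, ← ht]
  have h1 : β * (∫ α in Icc 0 t, U (x-α) ∂F.measure) ≤ β * (CU * F t) :=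
    mul_le_mul_of_nonneg_left hI1 hβ.le
  have h2 : β * (∫ α in Ioc t x, W₀ (x-α) ∂F.measure) ≤ β * (CW * (F x - F t)) :=
    mul_le_mul_of_nonneg_left hI2 hβ.le
  ring_nf
  ring_nf at h1 h2
  linarith

set_option maxHeartbeats 2000000 in
private lemma derivU_pos
    (p β c r σ : ℝ) (hp : 0 < p) (hβ : 0 < β) (hr : 0 < r) (hc : 0 < c) (hσ : 0 < σ)
    (F : StieltjesFunction ℝ)
    (hF01 : ∀ x : ℝ, F x ∈ Icc (0 : ℝ) 1)
    (hF0 : ∀ x : ℝ, x ≤ 0 → F x = 0)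
    (f : ℝ → ℝ) (C : ℝ) (hfm : Measurable f) (hfC : ∀ t, |f t| ≤ C)
    (hfF : ∀ x : ℝ, F x = ∫ t in (0 : ℝ)..x, f t)
    (x₀ : ℝ) (hx₀ : 0 < x₀)
    (W₀ : ℝ → ℝ) (hW₀c : ContinuousOn W₀ (Icc 0 x₀))
    (hW₀pos : ∀ x ∈ Icc (0 : ℝ) x₀, 0 < W₀ x)
    (hW₀mono : StrictMonoOn W₀ (Icc 0 x₀))
    (d₀ : ℝ) (hd₀ : HasDerivWithinAt W₀ d₀ (Icc 0 x₀) x₀)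
    (U : ℝ → ℝ) (hUc : ContinuousOn U (Ici x₀)) (hU2 : ContDiffOn ℝ 2 U (Ioi x₀))
    (hUx₀ : U x₀ = W₀ x₀) (hUd : HasDerivWithinAt U d₀ (Ici x₀) x₀)
    (hUsol : ∀ x ∈ Ioi x₀, Lstar2 p β c r σ F x₀ U W₀ x = 0) :
    ∀ x ∈ Ioi x₀, 0 < deriv U x := by
  have hopen : IsOpen (Ioi x₀) := isOpen_Ioi
  have hdU : ∀ x ∈ Ioi x₀, HasDerivAt U (deriv U x) x := fun x hx =>
    ((hU2.differentiableOn (by norm_num)).differentiableAt (hopen.mem_nhds hx)).hasDerivAt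
  have hU2' : ContDiffOn ℝ 1 (deriv U) (Ioi x₀) := hU2.deriv_of_isOpen hopen (by norm_num)
  have hdUc : ContinuousOn (deriv U) (Ioi x₀) := hU2'.continuousOn
  have hddU : ∀ x ∈ Ioi x₀, HasDerivAt (deriv U) (deriv (deriv U) x) x := fun x hx =>
    ((hU2'.differentiableOn one_ne_zero).differentiableAt (hopen.mem_nhds hx)).hasDerivAt
  have hL0 := leftLim_F_zero F hF0
  have hC0 : 0 ≤ C := le_trans (abs_nonneg _) (hfC 0)
  have hW0 : 0 < W₀ x₀ := hW₀pos x₀ ⟨hx₀.le, le_rfl⟩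
  set w := W₀ x₀ with hw
  -- d₀ ≥ 0
  have hd₀0 : 0 ≤ d₀ := by
    have hsl : Tendsto (slope W₀ x₀) (𝓝[Icc 0 x₀ \ {x₀}] x₀) (𝓝 d₀) :=
      hasDerivWithinAt_iff_tendsto_slope.1 hd₀
    have hne : (𝓝[Icc 0 x₀ \ {x₀}] x₀).NeBot := by
      have hsub : Ico 0 x₀ ⊆ Icc 0 x₀ \ {x₀} := fun y hy =>
        ⟨⟨hy.1, hy.2.le⟩, by simp [hy.2.ne]⟩
      have h1 : (𝓝[Ico 0 x₀] x₀).NeBot := by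
        apply mem_closure_iff_nhdsWithin_neBot.1
        rw [closure_Ico hx₀.ne]
        exact ⟨hx₀.le, le_rfl⟩
      exact h1.mono (nhdsWithin_mono _ hsub)
    refine ge_of_tendsto hsl ?_
    filter_upwards [eventually_mem_nhdsWithin] with y hy
    have hyx₀ : y < x₀ := lt_of_le_of_ne hy.1.2 (by simpa using hy.2)
    have h1 : W₀ y - W₀ x₀ < 0 :=
      sub_neg.2 (hW₀mono hy.1 ⟨hx₀.le, le_rfl⟩ hyx₀)
    have h2 : y - x₀ < 0 := sub_neg.2 hyx₀
    rw [slope_def_field]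
    exact (div_pos_of_neg_of_neg h1 h2).le
  -- sup form of the solution property
  have hsup : ∀ x ∈ Ioi x₀, (⨆ γ : Icc (0:ℝ) 1,
      ((σ^2*x^2*deriv (deriv U) x/2)*(γ:ℝ)^2 + (r*x*deriv U x)*(γ:ℝ)
        + (p*deriv U x - Mop2 β c F x₀ U W₀ x))) = 0 := by
    intro x hx
    refine Eq.trans ?_ (hUsol x hx)
    simp only [Lstar2]
    refine iSup_congr fun γ => ?_
    simp only [Lg2]
    ring
  -- key: second derivative positive at bad points with positive M
  have hkey : ∀ x ∈ Ioi x₀, ∀ δ : ℝ, 0 < δ → δ ≤ Mop2 β c F x₀ U W₀ x → deriv U x ≤ 0 →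
      0 < deriv (deriv U) x := by
    intro x hx δ hδ hM hd
    have hx0 : 0 < x := lt_trans hx₀ hx
    have hB : r*x*deriv U x ≤ 0 :=
      mul_nonpos_of_nonneg_of_nonpos (by positivity) hd
    have hK : p*deriv U x - Mop2 β c F x₀ U W₀ x ≤ -δ := by
      nlinarith [mul_nonpos_of_nonneg_of_nonpos hp.le hd]
    have hA := quad_A_large hδ (hsup x hx) hB hK
    by_contra hdd
    push_neg at hdd
    nlinarith [mul_pos (pow_pos hσ 2) (pow_pos hx0 2),
      mul_nonneg (mul_pos (pow_pos hσ 2) (pow_pos hx0 2)).le (neg_nonneg.2 hdd)]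
  -- continuity bound for U near x₀
  have hUcx₀ : ContinuousWithinAt U (Ici x₀) x₀ := hUc x₀ self_mem_Ici
  obtain ⟨η, hη0, hηw, hηc⟩ : ∃ η : ℝ, 0 < η ∧ η ≤ w/2 ∧ η ≤ c*w/(8*(c+β)) :=
    ⟨min (w/2) (c*w/(8*(c+β))), lt_min (by linarith) (by positivity),
      min_le_left _ _, min_le_right _ _⟩
  obtain ⟨ε₁, hε₁, hball⟩ := Metric.continuousWithinAt_iff.1 hUcx₀ η hη0
  have hD0 : (0:ℝ) ≤ β*(w+η)*C := by positivity
  obtain ⟨ε, hε0, hεε₁, hεone, hεD⟩ :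
      ∃ ε : ℝ, 0 < ε ∧ ε < ε₁ ∧ ε ≤ 1 ∧ ε ≤ c*w/(4*(β*(w+η)*C+1)) :=
    ⟨min (min (ε₁/2) 1) (c*w/(4*(β*(w+η)*C+1))),
      lt_min (lt_min (by linarith) one_pos) (by positivity),
      lt_of_le_of_lt ((min_le_left _ _).trans (min_le_left _ _)) (by linarith),
      (min_le_left _ _).trans (min_le_right _ _), min_le_right _ _⟩
  have hUbd : ∀ x, x₀ < x → x ≤ x₀ + ε → ∀ y ∈ Icc x₀ x, w - η ≤ U y ∧ U y ≤ w + η := by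
    intro x hx1 hx2 y hy
    have hdist : dist y x₀ < ε₁ := by
      rw [Real.dist_eq, abs_of_nonneg (by linarith [hy.1])]
      linarith [hy.2]
    have := hball hy.1 hdist
    rw [Real.dist_eq, hUx₀] at this
    have := abs_lt.1 this
    constructor <;> linarith [this.1, this.2]
  -- M bounded below near x₀
  have hMnear : ∀ x, x₀ < x → x ≤ x₀ + ε → c*w/2 ≤ Mop2 β c F x₀ U W₀ x := by
    intro x hx1 hx2
    have hCU : ∀ y ∈ Icc x₀ x, U y ≤ w + η := fun y hy => (hUbd x hx1 hx2 y hy).2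
    have hCW : ∀ y ∈ Icc 0 x₀, W₀ y ≤ w := by
      intro y hy
      rcases eq_or_lt_of_le hy.2 with he | hl
      · exact le_of_eq (by rw [he, hw])
      · exact (hW₀mono hy ⟨hx₀.le, le_rfl⟩ hl).le
    have hFt0 : 0 ≤ F (x - x₀) := (hF01 _).1
    have hFle : F (x-x₀) ≤ F x := F.mono (by linarith)
    have hMlb := Mlb β c hβ F hL0 x₀ x hx1 U W₀ hUc hW₀c (w+η) w hCU hCW hFt0 hFle
    have hFlin : F (x - x₀) ≤ C*(x-x₀) := F_lin_bound F f C hfm hfC hfF (by linarith)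
    have hFx1 : F x ≤ 1 := (hF01 x).2
    have hUx_lb : w - η ≤ U x :=
      (hUbd x hx1 hx2 x ⟨hx1.le, le_rfl⟩).1
    have e1 : β*(w+η)*(F (x-x₀)) ≤ (β*(w+η)*C)*ε := by
      have g1 : β*(w+η)*(F (x-x₀)) ≤ β*(w+η)*(C*(x-x₀)) :=
        mul_le_mul_of_nonneg_left hFlin (by positivity)
      have g2 : β*(w+η)*(C*(x-x₀)) ≤ β*(w+η)*C*ε := by
        have hxε : x - x₀ ≤ ε := by linarith
        nlinarith [mul_nonneg (mul_nonneg hβ.le (by linarith : (0:ℝ) ≤ w + η)) hC0]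
      linarith
    have e2 : (β*(w+η)*C)*ε ≤ c*w/4 := by
      have g2 : (β*(w+η)*C)*ε ≤ (β*(w+η)*C)*(c*w/(4*(β*(w+η)*C+1))) :=
        mul_le_mul_of_nonneg_left hεD hD0
      have g3 : (β*(w+η)*C)*(c*w/(4*(β*(w+η)*C+1))) ≤ c*w/4 := by
        rw [mul_div_assoc']
        rw [div_le_div_iff₀ (by linarith) (by norm_num)]
        nlinarith [mul_nonneg (mul_nonneg hc.le hW0.le) hD0]
      linarith
    have e3 : β*w*(F x - F (x-x₀)) ≤ β*w := by
      nlinarith [mul_nonneg hβ.le hW0.le]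
    have e4 : (c+β)*(w-η) ≤ (c+β)*U x :=
      mul_le_mul_of_nonneg_left hUx_lb (by positivity)
    have e5 : (c+β)*η ≤ c*w/8 := by
      have g1 : (c+β)*η ≤ (c+β)*(c*w/(8*(c+β))) :=
        mul_le_mul_of_nonneg_left hηc (by positivity)
      have heq : (c+β)*(c*w/(8*(c+β))) = c*w/8 := by
        field_simp
      linarith
    nlinarith [hMlb, e1, e2, e3, e4, e5]
  have hMpos : 0 < c*w/2 := by positivity
  -- second derivative positive at bad points near x₀
  have hnear : ∀ x, x₀ < x → x ≤ x₀ + ε → deriv U x ≤ 0 → 0 < deriv (deriv U) x :=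
    fun x hx1 hx2 hd => hkey x hx1 (c*w/2) hMpos (hMnear x hx1 hx2) hd
  -- positivity of deriv U near x₀
  have hpos_near : ∀ y, x₀ < y → y ≤ x₀ + ε → 0 < deriv U y := by
    intro y hy1 hy2
    by_contra hgy
    push_neg at hgy
    set T : Set ℝ := {z | x₀ < z ∧ z ≤ y ∧ ∀ t, z ≤ t → t ≤ y → deriv U t ≤ 0} with hT
    have hyT : y ∈ T := ⟨hy1, le_rfl, fun t h1 h2 => by rw [le_antisymm h2 h1]; exact hgy⟩
    have hTbdd : BddBelow T := ⟨x₀, fun z hz => hz.1.le⟩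
    set z₀ := sInf T with hz₀
    have hz₀y : z₀ ≤ y := csInf_le hTbdd hyT
    have hz₀x₀ : x₀ ≤ z₀ := le_csInf ⟨y, hyT⟩ (fun z hz => hz.1.le)
    have hTsub : ∀ t, z₀ < t → t ≤ y → deriv U t ≤ 0 := by
      intro t h1 h2
      obtain ⟨z, hzT, hzt⟩ := exists_lt_of_csInf_lt ⟨y, hyT⟩ h1
      exact hzT.2.2 t hzt.le h2
    have hdd_pos : ∀ t, z₀ < t → t ≤ y → 0 < deriv (deriv U) t := fun t h1 h2 =>
      hnear t (lt_of_le_of_lt hz₀x₀ h1) (le_trans h2 hy2) (hTsub t h1 h2)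
    have hmono_g : StrictMonoOn (deriv U) (Ioc z₀ y) := by
      apply strictMonoOn_of_deriv_pos (convex_Ioc z₀ y)
      · exact hdUc.mono (fun t ht => lt_of_le_of_lt hz₀x₀ ht.1)
      · intro t ht
        rw [interior_Ioc] at ht
        exact hdd_pos t ht.1 ht.2.le
    rcases eq_or_lt_of_le hz₀x₀ with hcase | hcase
    · -- z₀ = x₀ : contradiction with d₀ ≥ 0
      set z := (x₀ + y)/2 with hzdef
      have hz1 : x₀ < z := by rw [hzdef]; linarith
      have hz2 : z < y := by rw [hzdef]; linarith
      have hgz_neg : deriv U z < 0 := by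
        have hmem1 : z ∈ Ioc z₀ y := ⟨by rw [← hcase]; exact hz1, hz2.le⟩
        have hmem2 : y ∈ Ioc z₀ y := ⟨by rw [← hcase]; exact hy1, le_rfl⟩
        have h1 : deriv U z < deriv U y := hmono_g hmem1 hmem2 hz2
        linarith
      have hsl : Tendsto (slope U x₀) (𝓝[Ici x₀ \ {x₀}] x₀) (𝓝 d₀) :=
        hasDerivWithinAt_iff_tendsto_slope.1 hUd
      have hIci : Ici x₀ \ {x₀} = Ioi x₀ := by
        ext s; simp [mem_diff, mem_Ici, mem_Ioi, lt_iff_le_and_ne, eq_comm]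
      rw [hIci] at hsl
      have hev : ∀ᶠ t in 𝓝[>] x₀, slope U x₀ t ≤ deriv U z := by
        have hmem : Ioo x₀ z ∈ 𝓝[>] x₀ := Ioo_mem_nhdsGT_of_mem ⟨le_rfl, hz1⟩
        filter_upwards [hmem] with t ht
        obtain ⟨ξ, hξ, hslope⟩ := exists_deriv_eq_slope U ht.1
          (hUc.mono (fun s hs => hs.1))
          (fun s hs => ((hdU s (mem_Ioi.2 hs.1)).differentiableAt).differentiableWithinAt)
        rw [slope_def_field, ← hslope]
        have hgm : deriv U ξ < deriv U z := by
          apply hmono_g ⟨by rw [← hcase]; exact hξ.1, by linarith [hξ.2, ht.2, hz2.le]⟩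
            ⟨by rw [← hcase]; exact hz1, hz2.le⟩
          linarith [hξ.2, ht.2]
        linarith
      have hfinal : d₀ ≤ deriv U z := le_of_tendsto hsl hev
      linarith
    · -- x₀ < z₀
      have hz₀Ioi : z₀ ∈ Ioi x₀ := hcase
      have hga : deriv U z₀ ≤ 0 := by
        rcases eq_or_lt_of_le hz₀y with hzy | hzy
        · rw [hzy]; exact hgy
        · by_contra hpos
          push_neg at hpos
          have hct : ContinuousAt (deriv U) z₀ := hdUc.continuousAt (hopen.mem_nhds hz₀Ioi)
          have hev : ∀ᶠ t in 𝓝 z₀, 0 < deriv U t := hct.eventually (lt_mem_nhds hpos)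
          obtain ⟨δ', hδ', hball'⟩ := Metric.eventually_nhds_iff.1 hev
          set t := min (z₀ + δ'/2) ((z₀+y)/2) with htdef
          have ht1 : z₀ < t := lt_min (by linarith) (by linarith)
          have ht2 : t ≤ y := le_trans (min_le_right _ _) (by linarith)
          have ht3 : dist t z₀ < δ' := by
            rw [Real.dist_eq, abs_of_nonneg (by linarith)]
            calc t - z₀ ≤ (z₀ + δ'/2) - z₀ := by linarith [min_le_left (z₀ + δ'/2) ((z₀+y)/2)]
              _ < δ' := by linarith
          linarith [hball' ht3, hTsub t ht1 ht2]
      have hb : ∀ z, x₀ < z → z < z₀ → ∃ t, z ≤ t ∧ t < z₀ ∧ 0 < deriv U t := by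
        intro z hzx hzz
        have hzT : z ∉ T := fun hmm => absurd (csInf_le hTbdd hmm) (not_le.2 hzz)
        have hnall : ¬(∀ t, z ≤ t → t ≤ y → deriv U t ≤ 0) := by
          intro hall; exact hzT ⟨hzx, by linarith, hall⟩
        push_neg at hnall
        obtain ⟨t, ht1, ht2, ht3⟩ := hnall
        refine ⟨t, ht1, ?_, ht3⟩
        rcases lt_trichotomy t z₀ with hh | hh | hh
        · exact hh
        · exfalso; rw [hh] at ht3; linarith
        · exfalso; linarith [hTsub t hh ht2]
      have hgb : 0 ≤ deriv U z₀ := by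
        by_contra hneg'
        push_neg at hneg'
        have hct : ContinuousAt (deriv U) z₀ := hdUc.continuousAt (hopen.mem_nhds hz₀Ioi)
        have hev : ∀ᶠ t in 𝓝 z₀, deriv U t < 0 := hct.eventually (gt_mem_nhds hneg')
        obtain ⟨δ', hδ', hball'⟩ := Metric.eventually_nhds_iff.1 hev
        set z := max (z₀ - δ'/2) ((x₀+z₀)/2) with hzdef
        have hza : x₀ < z := lt_of_lt_of_le (by linarith) (le_max_right _ _)
        have hzb : z < z₀ := max_lt (by linarith) (by linarith)
        obtain ⟨t, ht1, ht2, ht3⟩ := hb z hza hzb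
        have htd : dist t z₀ < δ' := by
          rw [Real.dist_eq, abs_of_nonpos (by linarith)]
          have : z₀ - δ'/2 ≤ z := le_max_left _ _
          linarith
        linarith [hball' htd]
      have hg0 : deriv U z₀ = 0 := le_antisymm hga hgb
      have hdd : 0 < deriv (deriv U) z₀ := hnear z₀ hcase (le_trans hz₀y hy2) hga
      have hslg : Tendsto (slope (deriv U) z₀) (𝓝[<] z₀) (𝓝 (deriv (deriv U) z₀)) := by
        have h1 := ((hddU z₀ hz₀Ioi).hasDerivWithinAt (s := Iio z₀))
        have h2 := hasDerivWithinAt_iff_tendsto_slope.1 h1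
        rwa [show Iio z₀ \ {z₀} = Iio z₀ from diff_singleton_eq_self (by simp)] at h2
      have hev : ∀ᶠ t in 𝓝[<] z₀, 0 < slope (deriv U) z₀ t :=
        hslg.eventually (lt_mem_nhds hdd)
      have hev2 : ∀ᶠ t in 𝓝[<] z₀, deriv U t < 0 := by
        filter_upwards [hev, eventually_mem_nhdsWithin] with t h1 h2
        rw [slope_def_field, hg0, sub_zero] at h1
        have ht : t < z₀ := h2
        by_contra hge
        push_neg at hge
        have : deriv U t / (t - z₀) ≤ 0 :=
          div_nonpos_of_nonneg_of_nonpos hge (by linarith)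
        linarith
      obtain ⟨a, ha, hsub⟩ := mem_nhdsLT_iff_exists_Ioo_subset.1 hev2
      set z := max ((a+z₀)/2) ((x₀+z₀)/2) with hzdef
      have hza : x₀ < z := lt_of_lt_of_le (by linarith) (le_max_right _ _)
      have hzb : z < z₀ := max_lt (by simp only [mem_Iio] at ha; linarith) (by linarith)
      obtain ⟨t, ht1, ht2, ht3⟩ := hb z hza hzb
      have haz : a < z := by
        simp only [mem_Iio] at ha
        calc a < (a+z₀)/2 := by linarith
          _ ≤ z := le_max_left _ _
      have : deriv U t < 0 := hsub ⟨lt_of_lt_of_le haz ht1, ht2⟩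
      linarith
  -- global: first bad point
  intro x hx
  by_contra hneg
  push_neg at hneg
  set S : Set ℝ := {y | x₀ < y ∧ deriv U y ≤ 0} with hS
  have hxS : x ∈ S := ⟨hx, hneg⟩
  have hSbdd : BddBelow S := ⟨x₀, fun z hz => hz.1.le⟩
  set x₁ := sInf S with hx₁
  have hx₁lb : x₀ + ε ≤ x₁ := by
    apply le_csInf ⟨x, hxS⟩
    intro z hz
    by_contra hlt
    push_neg at hlt
    exact absurd (hpos_near z hz.1 (by linarith)) (not_lt.2 hz.2)
  have hx₁Ioi : x₁ ∈ Ioi x₀ := lt_of_lt_of_le (by linarith) hx₁lb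
  have hposlt : ∀ t, x₀ < t → t < x₁ → 0 < deriv U t := by
    intro t h1 h2
    by_contra hle
    push_neg at hle
    exact absurd (csInf_le hSbdd ⟨h1, hle⟩) (not_le.2 h2)
  have hg1le : deriv U x₁ ≤ 0 := by
    by_contra hpos
    push_neg at hpos
    have hct : ContinuousAt (deriv U) x₁ := hdUc.continuousAt (hopen.mem_nhds hx₁Ioi)
    have hev : ∀ᶠ t in 𝓝 x₁, 0 < deriv U t := hct.eventually (lt_mem_nhds hpos)
    obtain ⟨δ', hδ', hball'⟩ := Metric.eventually_nhds_iff.1 hev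
    obtain ⟨s, hsS, hslt⟩ := exists_lt_of_csInf_lt ⟨x, hxS⟩
      (show sInf S < x₁ + δ' by rw [← hx₁]; linarith)
    have hs1 : x₁ ≤ s := csInf_le hSbdd hsS
    have hsd : dist s x₁ < δ' := by
      rw [Real.dist_eq, abs_of_nonneg (by linarith)]
      linarith
    linarith [hball' hsd, hsS.2]
  have hg1ge : 0 ≤ deriv U x₁ := by
    by_contra hneg'
    push_neg at hneg'
    have hct : ContinuousAt (deriv U) x₁ := hdUc.continuousAt (hopen.mem_nhds hx₁Ioi)
    have hev : ∀ᶠ t in 𝓝 x₁, deriv U t < 0 := hct.eventually (gt_mem_nhds hneg')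
    obtain ⟨δ', hδ', hball'⟩ := Metric.eventually_nhds_iff.1 hev
    set t := max (x₁ - δ'/2) ((x₀ + x₁)/2) with htdef
    have hx₀x₁ : x₀ < x₁ := hx₁Ioi
    have ht1 : x₀ < t := lt_of_lt_of_le (by linarith) (le_max_right _ _)
    have ht2 : t < x₁ := max_lt (by linarith) (by linarith)
    have htd : dist t x₁ < δ' := by
      rw [Real.dist_eq, abs_of_nonpos (by linarith)]
      have : x₁ - δ'/2 ≤ t := le_max_left _ _
      linarith
    linarith [hball' htd, hposlt t ht1 ht2]
  have hg1 : deriv U x₁ = 0 := le_antisymm hg1le hg1ge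
  have hx₀x₁ : x₀ < x₁ := hx₁Ioi
  have hmonoU : MonotoneOn U (Icc x₀ x₁) := by
    apply monotoneOn_of_deriv_nonneg (convex_Icc x₀ x₁) (hUc.mono Icc_subset_Ici_self)
    · intro t ht
      rw [interior_Icc] at ht
      exact ((hdU t (mem_Ioi.2 ht.1)).differentiableAt).differentiableWithinAt
    · intro t ht
      rw [interior_Icc] at ht
      exact (hposlt t ht.1 ht.2).le
  have hUx₁pos : 0 < U x₁ := by
    have := hmonoU (left_mem_Icc.2 hx₀x₁.le) (right_mem_Icc.2 hx₀x₁.le) hx₀x₁.le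
    rw [hUx₀] at this
    linarith
  have hCU : ∀ y ∈ Icc x₀ x₁, U y ≤ U x₁ := fun y hy =>
    hmonoU hy (right_mem_Icc.2 hx₀x₁.le) hy.2
  have hCW : ∀ y ∈ Icc 0 x₀, W₀ y ≤ U x₁ := by
    intro y hy
    have h1 : W₀ y ≤ W₀ x₀ := by
      rcases eq_or_lt_of_le hy.2 with he | hl
      · rw [he]
      · exact (hW₀mono hy ⟨hx₀.le, le_rfl⟩ hl).le
    have h3 : U x₀ ≤ U x₁ := hmonoU (left_mem_Icc.2 hx₀x₁.le) (right_mem_Icc.2 hx₀x₁.le) hx₀x₁.le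
    rw [hUx₀] at h3
    linarith
  have hM := Mlb β c hβ F hL0 x₀ x₁ hx₀x₁ U W₀ hUc hW₀c (U x₁) (U x₁) hCU hCW
    ((hF01 _).1) (F.mono (by linarith))
  have hMx₁ : c * U x₁ ≤ Mop2 β c F x₀ U W₀ x₁ := by
    have hFx : F x₁ ≤ 1 := (hF01 x₁).2
    have hF0' : 0 ≤ F (x₁ - x₀) := (hF01 _).1
    nlinarith [hM, mul_nonneg hβ.le hUx₁pos.le]
  have hdd : 0 < deriv (deriv U) x₁ :=
    hkey x₁ hx₁Ioi (c * U x₁) (by positivity) hMx₁ hg1le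
  have hslg : Tendsto (slope (deriv U) x₁) (𝓝[<] x₁) (𝓝 (deriv (deriv U) x₁)) := by
    have h1 := ((hddU x₁ hx₁Ioi).hasDerivWithinAt (s := Iio x₁))
    have h2 := hasDerivWithinAt_iff_tendsto_slope.1 h1
    rwa [show Iio x₁ \ {x₁} = Iio x₁ from diff_singleton_eq_self (by simp)] at h2
  have hev : ∀ᶠ t in 𝓝[<] x₁, slope (deriv U) x₁ t ≤ 0 := by
    have hmem : Ioo x₀ x₁ ∈ 𝓝[<] x₁ := Ioo_mem_nhdsLT_of_mem ⟨hx₀x₁, le_rfl⟩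
    filter_upwards [hmem] with t ht
    have h1 : 0 < deriv U t := hposlt t ht.1 ht.2
    rw [slope_def_field, hg1, sub_zero]
    exact div_nonpos_of_nonneg_of_nonpos h1.le (by linarith [ht.2])
  have : deriv (deriv U) x₁ ≤ 0 := le_of_tendsto hslg hev
  linarith

set_option maxHeartbeats 1000000 in
/-- (Proposition 6.3(b)): assume `F` has a bounded density; let `U` be the unique `C²`
solution of `L*(U,W₀) = 0` on `(x₀,∞)` with `U x₀ = W₀ x₀`, `U'(x₀) = W₀'(x₀)`. Then with
`γ̃(U,W₀)(x) = min {1, 2(M(U,W₀)(x) - pU'(x)) / (rxU'(x))}`, the supremum in `L*(U,W₀)`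
is attained at `γ̃(U,W₀)(x)` and `L_{γ̃(U,W₀)(x)}(U,W₀)(x) = 0` for all `x > x₀`. -/
theorem continuation_gamma_formula
    (p β c r σ : ℝ) (hp : 0 < p) (hβ : 0 < β) (hr : 0 < r) (hrc : r < c) (hσ : 0 < σ)
    (F : StieltjesFunction ℝ)
    (hF01 : ∀ x : ℝ, F x ∈ Icc (0 : ℝ) 1)
    (hF0 : ∀ x : ℝ, x ≤ 0 → F x = 0)
    (hF1 : Tendsto (⇑F) atTop (nhds 1))
    (hFmean : IntegrableOn id (Ici (0 : ℝ)) F.measure)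
    (hFd : ∃ f : ℝ → ℝ, Measurable f ∧ (∃ C : ℝ, ∀ t, |f t| ≤ C) ∧ (∀ t, 0 ≤ f t) ∧
      (∀ t : ℝ, t ≤ 0 → f t = 0) ∧ ∀ x : ℝ, F x = ∫ t in (0 : ℝ)..x, f t)
    (x₀ : ℝ) (hx₀ : 0 < x₀)
    (W₀ : ℝ → ℝ)
    (hW₀c : ContinuousOn W₀ (Icc 0 x₀))
    (hW₀pos : ∀ x ∈ Icc (0 : ℝ) x₀, 0 < W₀ x)
    (hW₀mono : StrictMonoOn W₀ (Icc 0 x₀))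
    (d₀ : ℝ) (hd₀ : HasDerivWithinAt W₀ d₀ (Icc 0 x₀) x₀)
    (U : ℝ → ℝ)
    (hUc : ContinuousOn U (Ici x₀)) (hU2 : ContDiffOn ℝ 2 U (Ioi x₀))
    (hUx₀ : U x₀ = W₀ x₀) (hUd : HasDerivWithinAt U d₀ (Ici x₀) x₀)
    (hUsol : ∀ x ∈ Ioi x₀, Lstar2 p β c r σ F x₀ U W₀ x = 0) :
    ∀ x ∈ Ioi x₀,
      Lstar2 p β c r σ F x₀ U W₀ x =
        Lg2 p β c r σ F x₀
          (min 1 (2 * (Mop2 β c F x₀ U W₀ x - p * deriv U x) / (r * x * deriv U x)))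
          U W₀ x ∧
      Lg2 p β c r σ F x₀
        (min 1 (2 * (Mop2 β c F x₀ U W₀ x - p * deriv U x) / (r * x * deriv U x)))
        U W₀ x = 0 := by
  obtain ⟨f, hfm, ⟨C, hfC⟩, hfnn, hfneg, hfF⟩ := hFd
  have hc : 0 < c := lt_trans hr hrc
  have hdpos := derivU_pos p β c r σ hp hβ hr hc hσ F hF01 hF0 f C hfm hfC hfF
    x₀ hx₀ W₀ hW₀c hW₀pos hW₀mono d₀ hd₀ U hUc hU2 hUx₀ hUd hUsol
  intro x hx
  have hd : 0 < deriv U x := hdpos x hx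
  have hx0 : 0 < x := lt_trans hx₀ hx
  have hBpos : 0 < r*x*deriv U x := by positivity
  have hsupx : (⨆ γ : Icc (0:ℝ) 1,
      ((σ^2*x^2*deriv (deriv U) x/2)*(γ:ℝ)^2 + (r*x*deriv U x)*(γ:ℝ)
        + (p*deriv U x - Mop2 β c F x₀ U W₀ x))) = 0 := by
    refine Eq.trans ?_ (hUsol x hx)
    simp only [Lstar2]
    refine iSup_congr fun γ => ?_
    simp only [Lg2]
    ring
  have hmain := quad_main hBpos hsupx
  have hargeq : 2 * (Mop2 β c F x₀ U W₀ x - p * deriv U x) / (r * x * deriv U x)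
      = (-2*(p*deriv U x - Mop2 β c F x₀ U W₀ x))/(r*x*deriv U x) := by
    congr 1
    ring
  have hval : Lg2 p β c r σ F x₀
      (min 1 (2 * (Mop2 β c F x₀ U W₀ x - p * deriv U x) / (r * x * deriv U x)))
      U W₀ x = 0 := by
    rw [hargeq]
    have hexp : Lg2 p β c r σ F x₀
        (min 1 ((-2*(p*deriv U x - Mop2 β c F x₀ U W₀ x))/(r*x*deriv U x))) U W₀ x
        = (σ^2*x^2*deriv (deriv U) x/2)
            * (min 1 ((-2*(p*deriv U x - Mop2 β c F x₀ U W₀ x))/(r*x*deriv U x)))^2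
          + (r*x*deriv U x)
            * (min 1 ((-2*(p*deriv U x - Mop2 β c F x₀ U W₀ x))/(r*x*deriv U x)))
          + (p*deriv U x - Mop2 β c F x₀ U W₀ x) := by
      simp only [Lg2]
      ring
    rw [hexp]
    exact hmain
  exact ⟨by rw [hUsol x hx, hval], hval⟩
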